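/- For any τ > 0 and real matrix Q ∈ ℝ^{m×n} with SVD Q = U Σ Vᵀ, the matrix P* = U S_τ(Σ) Vᵀ, where S_τ applies soft-thresholding S_τ(σ) = sign(σ)·max(|σ|−τ, 0) to each singular value, minimizes the function P ↦ τ‖P‖_* + (1/2)‖P − Q‖_F² over all P ∈ ℝ^{m×n}. -/

import Mathlib

open Matrix

/-- Squared Frobenius norm. -/
noncomputable def frobSq {m n : ℕ} (A : Matrix (Fin m) (Fin n) ℝ) : ℝ :=
  ∑ i, ∑ j, (A i j) ^ 2

/-- Nuclear norm: sum of singular values, i.e. of square roots of the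
eigenvalues of AᵀA. -/
noncomputable def nuclearNorm {m n : ℕ} (A : Matrix (Fin m) (Fin n) ℝ) : ℝ :=
  ∑ i, Real.sqrt ((Matrix.isHermitian_conjTranspose_mul_self A).eigenvalues i)

/-- Scalar soft-thresholding operator S_τ(σ) = sign(σ)·max(|σ|−τ, 0). -/
noncomputable def softThresh (τ σ : ℝ) : ℝ :=
  Real.sign σ * max (|σ| - τ) 0

/-! ### Auxiliary lemmas -/

noncomputable def Matrix.PosSemidef.sqrt {k : ℕ} {M : Matrix (Fin k) (Fin k) ℝ}
    (hM : M.PosSemidef) : Matrix (Fin k) (Fin k) ℝ :=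
  hM.1.eigenvectorUnitary.1 * diagonal ((RCLike.ofReal : ℝ → ℝ) ∘ Real.sqrt ∘ hM.1.eigenvalues) *
    (star hM.1.eigenvectorUnitary : Matrix (Fin k) (Fin k) ℝ)

open scoped MatrixOrder in
lemma Matrix.PosSemidef.sqrt_eq_cfcSqrt {k : ℕ} {M : Matrix (Fin k) (Fin k) ℝ}
    (hM : M.PosSemidef) : hM.sqrt = CFC.sqrt M := by
  rw [CFC.sqrt_eq_cfc, cfc_nnreal_eq_real _ M, hM.1.cfc_eq]
  simp only [Matrix.PosSemidef.sqrt, Matrix.IsHermitian.cfc, Unitary.conjStarAlgAut_apply]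
  have hf : (fun x : ℝ => ((NNReal.sqrt x.toNNReal : NNReal) : ℝ)) = Real.sqrt := by
    funext x
    rw [Real.coe_sqrt, Real.coe_toNNReal']
    rcases le_total x 0 with h | h
    · rw [max_eq_right h, Real.sqrt_zero, Real.sqrt_eq_zero'.mpr h]
    · rw [max_eq_left h]
  rw [hf]

open scoped MatrixOrder in
lemma Matrix.PosSemidef.posSemidef_sqrt {k : ℕ} {M : Matrix (Fin k) (Fin k) ℝ}
    (hM : M.PosSemidef) : hM.sqrt.PosSemidef := by
  rw [hM.sqrt_eq_cfcSqrt]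
  exact Matrix.nonneg_iff_posSemidef.mp (CFC.sqrt_nonneg M)

open scoped MatrixOrder in
lemma Matrix.PosSemidef.sqrt_mul_self {k : ℕ} {M : Matrix (Fin k) (Fin k) ℝ}
    (hM : M.PosSemidef) : hM.sqrt * hM.sqrt = M := by
  rw [hM.sqrt_eq_cfcSqrt]
  exact CFC.sqrt_mul_sqrt_self M hM.nonneg

open scoped MatrixOrder in
lemma Matrix.PosSemidef.eq_sqrt_of_sq_eq {k : ℕ} {A B : Matrix (Fin k) (Fin k) ℝ}
    (hA : A.PosSemidef) (hB : B.PosSemidef) (hAB : A ^ 2 = B) : A = hB.sqrt := by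
  rw [hB.sqrt_eq_cfcSqrt, eq_comm, CFC.sqrt_eq_iff B A hB.nonneg hA.nonneg, ← hAB, sq]

lemma SVT.trace_sqrt {k : ℕ} {M : Matrix (Fin k) (Fin k) ℝ} (hM : M.PosSemidef) :
    hM.sqrt.trace = ∑ i, Real.sqrt (hM.1.eigenvalues i) := by
  rw [Matrix.PosSemidef.sqrt, Matrix.trace_mul_comm, ← mul_assoc]
  rw [show (star hM.1.eigenvectorUnitary.1 : Matrix (Fin k) (Fin k) ℝ) *
      hM.1.eigenvectorUnitary.1 = 1 from Unitary.coe_star_mul_self _]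
  rw [one_mul, Matrix.trace_diagonal]
  simp

lemma SVT.sqrt_conj {k : ℕ} {M V : Matrix (Fin k) (Fin k) ℝ} (hM : M.PosSemidef)
    (hV : Vᵀ * V = 1) (hN : (V * M * Vᵀ).PosSemidef) :
    hN.sqrt = V * hM.sqrt * Vᵀ := by
  have hpsd : (V * hM.sqrt * Vᵀ).PosSemidef := by
    have := hM.posSemidef_sqrt.mul_mul_conjTranspose_same V
    simpa using this
  have hsq : (V * hM.sqrt * Vᵀ) ^ 2 = V * M * Vᵀ := by
    rw [pow_two]
    calc V * hM.sqrt * Vᵀ * (V * hM.sqrt * Vᵀ)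
        = V * (hM.sqrt * ((Vᵀ * V) * (hM.sqrt * Vᵀ))) := by simp only [mul_assoc]
      _ = V * (hM.sqrt * hM.sqrt) * Vᵀ := by rw [hV, one_mul, mul_assoc, mul_assoc]
      _ = V * M * Vᵀ := by rw [hM.sqrt_mul_self]
  exact (hpsd.eq_sqrt_of_sq_eq hN hsq).symm

lemma SVT.sqrt_congr {k : ℕ} {M M' : Matrix (Fin k) (Fin k) ℝ} (h : M = M')
    (hM : M.PosSemidef) (hM' : M'.PosSemidef) : hM.sqrt = hM'.sqrt := by subst h; rfl

lemma SVT.nuclear_eq_trace {m n : ℕ} (A : Matrix (Fin m) (Fin n) ℝ)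
    (h : (Aᵀ * A).PosSemidef) : nuclearNorm A = h.sqrt.trace := by
  rw [SVT.trace_sqrt]; rfl

lemma SVT.nuclear_conj {m n : ℕ} (A : Matrix (Fin m) (Fin n) ℝ)
    (U : Matrix (Fin m) (Fin m) ℝ) (V : Matrix (Fin n) (Fin n) ℝ)
    (hU : Uᵀ * U = 1) (hV : Vᵀ * V = 1) :
    nuclearNorm (U * A * Vᵀ) = nuclearNorm A := by
  have hM : (Aᵀ * A).PosSemidef := posSemidef_conjTranspose_mul_self A
  have hN : ((U * A * Vᵀ)ᵀ * (U * A * Vᵀ)).PosSemidef := posSemidef_conjTranspose_mul_self _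
  have h1 : (U * A * Vᵀ)ᵀ * (U * A * Vᵀ) = V * (Aᵀ * A) * Vᵀ := by
    calc (U * A * Vᵀ)ᵀ * (U * A * Vᵀ)
        = V * (Aᵀ * ((Uᵀ * U) * (A * Vᵀ))) := by
          simp only [Matrix.transpose_mul, Matrix.transpose_transpose, Matrix.mul_assoc]
      _ = V * (Aᵀ * A) * Vᵀ := by rw [hU, Matrix.one_mul]; simp only [Matrix.mul_assoc]
  have hN' : (V * (Aᵀ * A) * Vᵀ).PosSemidef := h1 ▸ hN
  rw [SVT.nuclear_eq_trace _ hM, SVT.nuclear_eq_trace _ hN, SVT.sqrt_congr h1 hN hN',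
    SVT.sqrt_conj hM hV hN', Matrix.trace_mul_comm, ← Matrix.mul_assoc, hV, Matrix.one_mul]

lemma SVT.cs_abs {ι : Type*} [Fintype ι] (f g : ι → ℝ) :
    ∑ i, |f i| * |g i| ≤ Real.sqrt (∑ i, f i ^ 2) * Real.sqrt (∑ i, g i ^ 2) := by
  have h := Finset.sum_mul_sq_le_sq_mul_sq Finset.univ (fun i => |f i|) (fun i => |g i|)
  simp only [sq_abs] at h
  have h0 : (0:ℝ) ≤ ∑ i, |f i| * |g i| :=
    Finset.sum_nonneg fun i _ => mul_nonneg (abs_nonneg _) (abs_nonneg _)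
  calc ∑ i, |f i| * |g i| = Real.sqrt ((∑ i, |f i| * |g i|) ^ 2) := by
        rw [Real.sqrt_sq h0]
    _ ≤ Real.sqrt ((∑ i, f i ^ 2) * ∑ i, g i ^ 2) := Real.sqrt_le_sqrt h
    _ = _ := Real.sqrt_mul (Finset.sum_nonneg fun i _ => sq_nonneg _) _

lemma SVT.sum_emb_le {α β : Type*} [Fintype α] [Fintype β] (e : α ↪ β) (f : β → ℝ)
    (hf : ∀ b, 0 ≤ f b) : ∑ a, f (e a) ≤ ∑ b, f b := by
  rw [← Finset.sum_map Finset.univ e f]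
  exact Finset.sum_le_sum_of_subset_of_nonneg (Finset.subset_univ _) fun i _ _ => hf i

lemma SVT.sum_emb_eq {α β : Type*} [Fintype α] [Fintype β] (e : α ↪ β) (f : β → ℝ)
    (hf : ∀ b, (∀ a, e a ≠ b) → f b = 0) : ∑ b, f b = ∑ a, f (e a) := by
  rw [← Finset.sum_map Finset.univ e f]
  refine (Finset.sum_subset (Finset.subset_univ _) ?_).symm
  intro b _ hb
  refine hf b fun a hab => hb ?_
  rw [Finset.mem_map]
  exact ⟨a, Finset.mem_univ a, hab⟩

/-- The two "diagonal" embeddings. -/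
def SVT.e1 (m n : ℕ) : Fin (min m n) ↪ Fin m :=
  ⟨Fin.castLE (min_le_left m n), Fin.castLE_injective _⟩
def SVT.e2 (m n : ℕ) : Fin (min m n) ↪ Fin n :=
  ⟨Fin.castLE (min_le_right m n), Fin.castLE_injective _⟩

lemma SVT.diag_le_nuclear {m n : ℕ} (A : Matrix (Fin m) (Fin n) ℝ) :
    ∑ i : Fin (min m n), |A (SVT.e1 m n i) (SVT.e2 m n i)| ≤ nuclearNorm A := by
  have hM : (Aᵀ * A).PosSemidef := posSemidef_conjTranspose_mul_self A
  set lam := hM.1.eigenvalues with hlam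
  set W : Matrix (Fin n) (Fin n) ℝ := hM.1.eigenvectorUnitary.1 with hW
  have hWsW : Wᵀ * W = 1 := Unitary.coe_star_mul_self hM.1.eigenvectorUnitary
  have hWWs : W * Wᵀ = 1 := mul_eq_one_comm.mp hWsW
  have hspec : Aᵀ * A = W * diagonal lam * Wᵀ := by
    have := hM.1.spectral_theorem
    rw [Unitary.conjStarAlgAut_apply] at this
    exact this
  set B := A * W with hB
  have hBtB : Bᵀ * B = diagonal lam := by
    calc Bᵀ * B = Wᵀ * (Aᵀ * A) * W := by
          rw [hB, Matrix.transpose_mul]; simp only [Matrix.mul_assoc]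
      _ = (Wᵀ * W) * diagonal lam * (Wᵀ * W) := by rw [hspec]; simp only [Matrix.mul_assoc]
      _ = diagonal lam := by rw [hWsW, Matrix.one_mul, Matrix.mul_one]
  have hBcol : ∀ j, ∑ k, (B k j) ^ 2 = lam j := by
    intro j
    have := congrFun (congrFun hBtB j) j
    simp only [Matrix.mul_apply, Matrix.transpose_apply, Matrix.diagonal_apply_eq] at this
    simpa [pow_two] using this
  have hWcol : ∀ j, ∑ k, (W k j) ^ 2 = 1 := by
    intro j
    have := congrFun (congrFun hWsW j) j
    simp only [Matrix.mul_apply, Matrix.transpose_apply, Matrix.one_apply_eq] at this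
    simpa [pow_two] using this
  have hA : ∀ i l, A i l = ∑ j, B i j * W l j := by
    intro i l
    have : A = B * Wᵀ := by
      rw [hB, Matrix.mul_assoc, hWWs, Matrix.mul_one]
    rw [this]
    simp [Matrix.mul_apply]
  calc ∑ i : Fin (min m n), |A (SVT.e1 m n i) (SVT.e2 m n i)|
      ≤ ∑ i : Fin (min m n), ∑ j, |B (SVT.e1 m n i) j| * |W (SVT.e2 m n i) j| := by
        refine Finset.sum_le_sum fun i _ => ?_
        rw [hA]
        refine le_trans (Finset.abs_sum_le_sum_abs _ _) ?_
        exact le_of_eq (Finset.sum_congr rfl fun j _ => abs_mul _ _)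
    _ = ∑ j, ∑ i : Fin (min m n), |B (SVT.e1 m n i) j| * |W (SVT.e2 m n i) j| :=
        Finset.sum_comm
    _ ≤ ∑ j, Real.sqrt (lam j) := by
        refine Finset.sum_le_sum fun j _ => ?_
        calc ∑ i : Fin (min m n), |B (SVT.e1 m n i) j| * |W (SVT.e2 m n i) j|
            ≤ Real.sqrt (∑ i : Fin (min m n), B (SVT.e1 m n i) j ^ 2) *
              Real.sqrt (∑ i : Fin (min m n), W (SVT.e2 m n i) j ^ 2) :=
              SVT.cs_abs (fun i => B (SVT.e1 m n i) j) (fun i => W (SVT.e2 m n i) j)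
          _ ≤ Real.sqrt (lam j) * Real.sqrt 1 := by
              have h1 : ∑ i : Fin (min m n), B (SVT.e1 m n i) j ^ 2 ≤ lam j := by
                rw [← hBcol j]
                exact SVT.sum_emb_le (SVT.e1 m n) (fun k => B k j ^ 2) fun k => sq_nonneg _
              have h2 : ∑ i : Fin (min m n), W (SVT.e2 m n i) j ^ 2 ≤ 1 := by
                rw [← hWcol j]
                exact SVT.sum_emb_le (SVT.e2 m n) (fun k => W k j ^ 2) fun k => sq_nonneg _
              exact mul_le_mul (Real.sqrt_le_sqrt h1) (Real.sqrt_le_sqrt h2)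
                (Real.sqrt_nonneg _) (Real.sqrt_nonneg _)
          _ = Real.sqrt (lam j) := by rw [Real.sqrt_one, mul_one]
    _ = nuclearNorm A := rfl

/-- Nuclear norm of a rectangular diagonal matrix with nonnegative diagonal. -/
lemma SVT.nuclear_diag {m n : ℕ} (C : Matrix (Fin m) (Fin n) ℝ)
    (hdiag : ∀ (i : Fin m) (j : Fin n), (i : ℕ) ≠ (j : ℕ) → C i j = 0)
    (hpos : ∀ (i : Fin m) (j : Fin n), (i : ℕ) = (j : ℕ) → 0 ≤ C i j) :
    nuclearNorm C = ∑ i : Fin (min m n), C (SVT.e1 m n i) (SVT.e2 m n i) := by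
  have hM : (Cᵀ * C).PosSemidef := posSemidef_conjTranspose_mul_self C
  set d : Fin n → ℝ := fun j => ∑ k, (C k j) ^ 2 with hd
  have hMdiag : Cᵀ * C = diagonal d := by
    ext j j'
    rcases eq_or_ne j j' with rfl | hne
    · simp [Matrix.mul_apply, Matrix.diagonal_apply_eq, hd, pow_two]
    · rw [Matrix.diagonal_apply_ne _ hne]
      rw [Matrix.mul_apply]
      refine Finset.sum_eq_zero fun k _ => ?_
      rcases eq_or_ne (k : ℕ) (j : ℕ) with h1 | h1
      · have h2 : (k : ℕ) ≠ (j' : ℕ) := by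
          intro h; exact hne (Fin.ext (h1.symm.trans h))
        rw [Matrix.transpose_apply, hdiag k j' h2, mul_zero]
      · rw [Matrix.transpose_apply, hdiag k j h1, zero_mul]
  have hd_nonneg : ∀ j, 0 ≤ d j := fun j => Finset.sum_nonneg fun k _ => sq_nonneg _
  have hsqrt_psd : (diagonal (fun j => Real.sqrt (d j))).PosSemidef :=
    Matrix.posSemidef_diagonal_iff.mpr fun j => Real.sqrt_nonneg _
  have hsq : (diagonal (fun j => Real.sqrt (d j))) ^ 2 = Cᵀ * C := by
    rw [hMdiag, pow_two, Matrix.diagonal_mul_diagonal]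
    exact congrArg diagonal (funext fun j => Real.mul_self_sqrt (hd_nonneg j))
  have hsqrt : hM.sqrt = diagonal (fun j => Real.sqrt (d j)) :=
    (hsqrt_psd.eq_sqrt_of_sq_eq hM hsq).symm
  rw [SVT.nuclear_eq_trace _ hM, hsqrt, Matrix.trace_diagonal]
  -- now: ∑ j, sqrt (d j) = ∑ i, C (e1 i) (e2 i)
  have hdval : ∀ j : Fin n, ∀ h : (j : ℕ) < m, d j = (C ⟨j, h⟩ j) ^ 2 := by
    intro j h
    have hdj : d j = ∑ k, (C k j) ^ 2 := rfl
    rw [hdj, Finset.sum_eq_single (⟨(j : ℕ), h⟩ : Fin m)]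
    · intro k _ hk
      have : (k : ℕ) ≠ (j : ℕ) := fun hc => hk (Fin.ext hc)
      rw [hdiag k j this]; ring
    · intro h'; exact absurd (Finset.mem_univ _) h'
  have hzero : ∀ j : Fin n, ¬ ((j : ℕ) < m) → d j = 0 := by
    intro j h
    refine Finset.sum_eq_zero fun k _ => ?_
    have : (k : ℕ) ≠ (j : ℕ) := by omega
    rw [hdiag k j this]; ring
  rw [SVT.sum_emb_eq (SVT.e2 m n) (fun j => Real.sqrt (d j))]
  · refine Finset.sum_congr rfl fun i _ => ?_
    have h : ((SVT.e2 m n i : Fin n) : ℕ) < m := lt_of_lt_of_le i.2 (min_le_left m n)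
    rw [hdval _ h, Real.sqrt_sq (hpos _ _ rfl)]
    rfl
  · intro j hj
    have h : ¬ ((j : ℕ) < m) := by
      intro hlt
      have hmin : (j : ℕ) < min m n := lt_min hlt j.2
      exact hj ⟨(j : ℕ), hmin⟩ (Fin.ext rfl)
    rw [hzero j h, Real.sqrt_zero]

/-! ### Frobenius norm lemmas -/

lemma SVT.frobSq_eq_trace {m n : ℕ} (A : Matrix (Fin m) (Fin n) ℝ) :
    frobSq A = (Aᵀ * A).trace := by
  rw [frobSq, Matrix.trace]
  rw [Finset.sum_comm]
  refine Finset.sum_congr rfl fun j _ => ?_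
  simp [Matrix.mul_apply, Matrix.diag, pow_two]

lemma SVT.frobSq_conj {m n : ℕ} (A : Matrix (Fin m) (Fin n) ℝ)
    (U : Matrix (Fin m) (Fin m) ℝ) (V : Matrix (Fin n) (Fin n) ℝ)
    (hU : Uᵀ * U = 1) (hV : Vᵀ * V = 1) :
    frobSq (U * A * Vᵀ) = frobSq A := by
  rw [SVT.frobSq_eq_trace, SVT.frobSq_eq_trace]
  have h1 : (U * A * Vᵀ)ᵀ * (U * A * Vᵀ) = V * (Aᵀ * A) * Vᵀ := by
    calc (U * A * Vᵀ)ᵀ * (U * A * Vᵀ)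
        = V * (Aᵀ * ((Uᵀ * U) * (A * Vᵀ))) := by
          simp only [Matrix.transpose_mul, Matrix.transpose_transpose, Matrix.mul_assoc]
      _ = V * (Aᵀ * A) * Vᵀ := by rw [hU, Matrix.one_mul]; simp only [Matrix.mul_assoc]
  rw [h1, Matrix.trace_mul_comm, ← Matrix.mul_assoc, hV, Matrix.one_mul]

lemma SVT.frobSq_prod {m n : ℕ} (A : Matrix (Fin m) (Fin n) ℝ) :
    frobSq A = ∑ p : Fin m × Fin n, (A p.1 p.2) ^ 2 := by
  rw [frobSq, ← Finset.sum_product']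
  rfl

def SVT.eP (m n : ℕ) : Fin (min m n) ↪ Fin m × Fin n :=
  ⟨fun i => (SVT.e1 m n i, SVT.e2 m n i), by
    intro a b h
    have := congrArg Prod.fst h
    exact (SVT.e1 m n).injective this⟩

lemma SVT.diag_le_frobSq {m n : ℕ} (A : Matrix (Fin m) (Fin n) ℝ) :
    ∑ i : Fin (min m n), (A (SVT.e1 m n i) (SVT.e2 m n i)) ^ 2 ≤ frobSq A := by
  rw [SVT.frobSq_prod]
  exact SVT.sum_emb_le (SVT.eP m n) (fun p => A p.1 p.2 ^ 2) fun p => sq_nonneg _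

lemma SVT.frobSq_diag {m n : ℕ} (C : Matrix (Fin m) (Fin n) ℝ)
    (hdiag : ∀ (i : Fin m) (j : Fin n), (i : ℕ) ≠ (j : ℕ) → C i j = 0) :
    frobSq C = ∑ i : Fin (min m n), (C (SVT.e1 m n i) (SVT.e2 m n i)) ^ 2 := by
  rw [SVT.frobSq_prod]
  refine SVT.sum_emb_eq (SVT.eP m n) (fun p => C p.1 p.2 ^ 2) ?_
  rintro ⟨i, j⟩ hp
  rcases eq_or_ne (i : ℕ) (j : ℕ) with h | h
  · exfalso
    have hmin : (i : ℕ) < min m n := lt_min i.2 (h ▸ j.2)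
    refine hp ⟨(i : ℕ), hmin⟩ ?_
    simp only [SVT.eP, Function.Embedding.coeFn_mk, Prod.mk.injEq]
    refine Prod.ext ?_ ?_
    · exact Fin.ext rfl
    · exact Fin.ext h
  · simp [hdiag i j h]

/-! ### Scalar lemma -/

lemma SVT.scalar {τ σ : ℝ} (hτ : 0 < τ) (hσ : 0 ≤ σ) (a : ℝ) :
    τ * softThresh τ σ + (1 / 2) * (softThresh τ σ - σ) ^ 2 ≤
    τ * |a| + (1 / 2) * (a - σ) ^ 2 := by
  have ha1 : a ≤ |a| := le_abs_self a
  have ha2 : -a ≤ |a| := neg_le_abs a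
  have ha0 : 0 ≤ |a| := abs_nonneg a
  rcases eq_or_lt_of_le hσ with h0 | h0
  · rw [softThresh, ← h0, Real.sign_zero, zero_mul]
    nlinarith
  · rw [softThresh, Real.sign_of_pos h0, one_mul, abs_of_pos h0]
    rcases le_or_gt σ τ with hc | hc
    · rw [max_eq_right (by linarith)]
      nlinarith [mul_le_mul_of_nonneg_right ha1 hσ, mul_le_mul_of_nonneg_left hc ha0,
        sq_nonneg a]
    · rw [max_eq_left (by linarith)]
      nlinarith [mul_le_mul_of_nonneg_left ha1 hτ.le, sq_nonneg (a - σ + τ)]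

/-- Singular value thresholding: for τ > 0 and Q = U Sig Vᵀ an SVD of Q
(U, V orthogonal, Sig a rectangular diagonal matrix with nonnegative diagonal),
the matrix P* = U S_τ(Sig) Vᵀ minimizes P ↦ τ‖P‖_* + (1/2)‖P − Q‖_F². -/
theorem stmt_2 (m n : ℕ) (τ : ℝ) (hτ : 0 < τ)
    (Q : Matrix (Fin m) (Fin n) ℝ)
    (U : Matrix (Fin m) (Fin m) ℝ) (V : Matrix (Fin n) (Fin n) ℝ)
    (Sig : Matrix (Fin m) (Fin n) ℝ)
    (hU : Uᵀ * U = 1) (hV : Vᵀ * V = 1)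
    (hSigdiag : ∀ (i : Fin m) (j : Fin n), (i : ℕ) ≠ (j : ℕ) → Sig i j = 0)
    (hSigpos : ∀ (i : Fin m) (j : Fin n), (i : ℕ) = (j : ℕ) → 0 ≤ Sig i j)
    (hQ : Q = U * Sig * Vᵀ) :
    ∀ P : Matrix (Fin m) (Fin n) ℝ,
      τ * nuclearNorm (U * (Matrix.of fun i j => softThresh τ (Sig i j)) * Vᵀ) +
        (1 / 2) * frobSq (U * (Matrix.of fun i j => softThresh τ (Sig i j)) * Vᵀ - Q) ≤
      τ * nuclearNorm P + (1 / 2) * frobSq (P - Q) := by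
  intro P
  set S : Matrix (Fin m) (Fin n) ℝ := Matrix.of fun i j => softThresh τ (Sig i j) with hS
  have hSdiag : ∀ (i : Fin m) (j : Fin n), (i : ℕ) ≠ (j : ℕ) → S i j = 0 := by
    intro i j h
    simp only [hS, Matrix.of_apply, hSigdiag i j h, softThresh, Real.sign_zero, zero_mul]
  have hSpos : ∀ (i : Fin m) (j : Fin n), (i : ℕ) = (j : ℕ) → 0 ≤ S i j := by
    intro i j h
    simp only [hS, Matrix.of_apply, softThresh]
    rcases lt_trichotomy (Sig i j) 0 with hlt | heq | hgt
    · exact absurd hlt (not_lt.mpr (hSigpos i j h))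
    · rw [heq, Real.sign_zero, zero_mul]
    · rw [Real.sign_of_pos hgt, one_mul]
      exact le_max_right _ _
  have hUUt : U * Uᵀ = 1 := mul_eq_one_comm.mp hU
  have hVVt : V * Vᵀ = 1 := mul_eq_one_comm.mp hV
  -- left-hand side
  have hSmSdiag : ∀ (i : Fin m) (j : Fin n), (i : ℕ) ≠ (j : ℕ) → (S - Sig) i j = 0 := by
    intro i j h
    simp [hSdiag i j h, hSigdiag i j h]
  have hLHSnuc : nuclearNorm (U * S * Vᵀ) =
      ∑ i : Fin (min m n), S (SVT.e1 m n i) (SVT.e2 m n i) := by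
    rw [SVT.nuclear_conj S U V hU hV, SVT.nuclear_diag S hSdiag hSpos]
  have hLHSfrob : frobSq (U * S * Vᵀ - Q) =
      ∑ i : Fin (min m n), ((S - Sig) (SVT.e1 m n i) (SVT.e2 m n i)) ^ 2 := by
    have : U * S * Vᵀ - Q = U * (S - Sig) * Vᵀ := by
      rw [hQ, Matrix.mul_sub, Matrix.sub_mul]
    rw [this, SVT.frobSq_conj _ U V hU hV, SVT.frobSq_diag _ hSmSdiag]
  -- right-hand side
  set A : Matrix (Fin m) (Fin n) ℝ := Uᵀ * P * V with hA
  have hP : P = U * A * Vᵀ := by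
    rw [hA]
    calc P = (U * Uᵀ) * P * (V * Vᵀ) := by rw [hUUt, hVVt, Matrix.one_mul, Matrix.mul_one]
      _ = U * (Uᵀ * P * V) * Vᵀ := by simp only [Matrix.mul_assoc]
  have hRHSnuc : nuclearNorm P = nuclearNorm A := by
    rw [hP, SVT.nuclear_conj A U V hU hV]
  have hRHSfrob : frobSq (P - Q) = frobSq (A - Sig) := by
    have : P - Q = U * (A - Sig) * Vᵀ := by
      rw [hP, hQ, Matrix.mul_sub, Matrix.sub_mul]
    rw [this, SVT.frobSq_conj _ U V hU hV]
  rw [hLHSnuc, hLHSfrob, hRHSnuc, hRHSfrob, Finset.mul_sum, Finset.mul_sum]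
  rw [← Finset.sum_add_distrib]
  have key : ∑ i : Fin (min m n),
      (τ * S (SVT.e1 m n i) (SVT.e2 m n i) +
        (1 / 2) * ((S - Sig) (SVT.e1 m n i) (SVT.e2 m n i)) ^ 2) ≤
      ∑ i : Fin (min m n),
      (τ * |A (SVT.e1 m n i) (SVT.e2 m n i)| +
        (1 / 2) * ((A (SVT.e1 m n i) (SVT.e2 m n i) - Sig (SVT.e1 m n i) (SVT.e2 m n i))) ^ 2) := by
    refine Finset.sum_le_sum fun i _ => ?_
    have hdval : ((SVT.e1 m n i : Fin m) : ℕ) = ((SVT.e2 m n i : Fin n) : ℕ) := rfl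
    have hσ := hSigpos _ _ hdval
    have := SVT.scalar hτ hσ (A (SVT.e1 m n i) (SVT.e2 m n i))
    simp only [Matrix.sub_apply, hS, Matrix.of_apply]
    exact this
  refine le_trans key ?_
  have h1 : ∑ i : Fin (min m n),
      (τ * |A (SVT.e1 m n i) (SVT.e2 m n i)| +
        (1 / 2) * ((A (SVT.e1 m n i) (SVT.e2 m n i) - Sig (SVT.e1 m n i) (SVT.e2 m n i))) ^ 2) =
      (∑ i : Fin (min m n), τ * |A (SVT.e1 m n i) (SVT.e2 m n i)|) +
      ∑ i : Fin (min m n),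
        (1 / 2) * ((A - Sig) (SVT.e1 m n i) (SVT.e2 m n i)) ^ 2 := by
    rw [← Finset.sum_add_distrib]
    refine Finset.sum_congr rfl fun i _ => ?_
    simp [Matrix.sub_apply]
  rw [h1]
  have h2 : (∑ i : Fin (min m n), τ * |A (SVT.e1 m n i) (SVT.e2 m n i)|) ≤ τ * nuclearNorm A := by
    rw [← Finset.mul_sum]
    exact mul_le_mul_of_nonneg_left (SVT.diag_le_nuclear A) hτ.le
  have h3 : (∑ i : Fin (min m n), (1 / 2) * ((A - Sig) (SVT.e1 m n i) (SVT.e2 m n i)) ^ 2) ≤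
      (1 / 2) * frobSq (A - Sig) := by
    rw [← Finset.mul_sum]
    exact mul_le_mul_of_nonneg_left (SVT.diag_le_frobSq (A - Sig)) (by norm_num)
  linarith
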